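/- If T is a tree with even maximum degree Δ(T) ≥ 6, then for every Abelian group 𝒢 of odd order |𝒢| ≥ Δ(T) + 3 there exists a nowhere-zero 𝒢-twin edge coloring of T. -/

import Mathlib

open Finset SimpleGraph

/-- A `𝒢`-twin edge coloring of `G`: a proper edge labeling `f : E(G) → 𝒢` such that
the induced weighted degrees `w(v) = ∑_{u ∈ N(v)} f(uv)` differ on adjacent vertices. -/
def IsTwinEdgeColoring {V : Type} [Fintype V] (G : SimpleGraph V) [DecidableRel G.Adj]
    {A : Type} [AddCommGroup A] (f : Sym2 V → A) : Prop :=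
  (∀ u v w : V, G.Adj u v → G.Adj u w → v ≠ w → f s(u, v) ≠ f s(u, w)) ∧
  (∀ u v : V, G.Adj u v →
    ∑ x ∈ G.neighborFinset u, f s(x, u) ≠ ∑ x ∈ G.neighborFinset v, f s(x, v))


set_option linter.unusedSectionVars false

open Finset

section GroupLemmas

variable {A : Type} [AddCommGroup A] [Fintype A] [DecidableEq A]

lemma no2tor (hodd : Odd (Fintype.card A)) {x : A} (h : x + x = 0) : x = 0 := by
  have h1 : addOrderOf x ∣ 2 := by
    apply addOrderOf_dvd_of_nsmul_eq_zero
    simpa [two_nsmul] using h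
  have h2 : addOrderOf x ∣ Fintype.card A := addOrderOf_dvd_card
  rcases (Nat.dvd_prime Nat.prime_two).mp h1 with h1 | h1
  · exact AddMonoid.addOrderOf_eq_one_iff.mp h1
  · exfalso
    rw [Nat.odd_iff] at hodd
    have : (2 : ℕ) ∣ Fintype.card A := h1 ▸ h2
    omega

lemma doubling_inj (hodd : Odd (Fintype.card A)) {x y : A} (h : x + x = y + y) : x = y := by
  have : (x - y) + (x - y) = 0 := by
    rw [sub_add_sub_comm, h, sub_self]
  exact sub_eq_zero.mp (no2tor hodd this)

lemma sum_univ_eq_zero (hodd : Odd (Fintype.card A)) : ∑ x : A, x = 0 := by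
  have h : ∑ x : A, -x = ∑ x : A, x := Fintype.sum_equiv (Equiv.neg A) _ _ (fun x => rfl)
  rw [Finset.sum_neg_distrib] at h
  exact no2tor hodd (by nth_rewrite 1 [← h]; exact neg_add_cancel _)

lemma exists_notin (F : Finset A) (h : F.card < Fintype.card A) : ∃ x : A, x ∉ F := by
  by_contra hc
  push_neg at hc
  have : (univ : Finset A) ⊆ F := fun x _ => hc x
  have := Finset.card_le_card this
  simp [Finset.card_univ] at this
  omega


lemma sym_pairs (hodd : Odd (Fintype.card A)) (B : Finset A) (j : ℕ)
    (hbud : 2 * j + 2 * B.card + 1 ≤ Fintype.card A) :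
    ∃ Y : Finset A, Y.card = 2 * j ∧ (∀ y ∈ Y, -y ∈ Y) ∧ (0 : A) ∉ Y ∧
      Disjoint Y B ∧ ∑ y ∈ Y, y = 0 := by
  induction j with
  | zero => exact ⟨∅, by simp⟩
  | succ j ih =>
    obtain ⟨Y, hc, hsym, h0, hdisj, hsum⟩ := ih (by omega)
    set F : Finset A := Y ∪ B ∪ B.image (fun b => -b) ∪ {0} with hF
    have hFcard : F.card ≤ 2 * j + 2 * B.card + 1 := by
      calc F.card ≤ (Y ∪ B ∪ B.image (fun b => -b)).card + ({0} : Finset A).card :=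
            Finset.card_union_le _ _
        _ ≤ (Y ∪ B).card + (B.image (fun b => -b)).card + 1 := by
            have := Finset.card_union_le (Y ∪ B) (B.image (fun b => -b))
            simp only [Finset.card_singleton]
            omega
        _ ≤ Y.card + B.card + B.card + 1 := by
            have h1 := Finset.card_union_le Y B
            have h2 := Finset.card_image_le (s := B) (f := fun b => -b)
            omega
        _ ≤ 2 * j + 2 * B.card + 1 := by omega
    obtain ⟨t, ht⟩ := exists_notin F (by omega)
    have ht0 : t ≠ 0 := by intro h; apply ht; simp [hF, h]
    have htY : t ∉ Y := by intro h; apply ht; simp [hF, h]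
    have htB : t ∉ B := by intro h; apply ht; simp [hF, h]
    have htnB : -t ∉ B := by
      intro h
      apply ht
      have : t ∈ B.image (fun b => -b) := by
        refine Finset.mem_image.mpr ⟨-t, h, by simp⟩
      simp [hF, this]
    have htnY : -t ∉ Y := fun h => htY (by simpa using hsym _ h)
    have htn0 : -t ≠ 0 := fun h => ht0 (by simpa using h)
    have htne : t ≠ -t := by
      intro h
      exact ht0 (no2tor hodd (by nth_rewrite 2 [h]; simp))
    refine ⟨insert t (insert (-t) Y), ?_, ?_, ?_, ?_, ?_⟩
    · rw [Finset.card_insert_of_notMem (by simp [htY, htne]),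
        Finset.card_insert_of_notMem htnY, hc]
      ring
    · intro y hy
      simp only [Finset.mem_insert] at hy ⊢
      rcases hy with rfl | rfl | hy
      · tauto
      · simp [htne.symm]  -- y = -t, need --t = t ∈ : -(-t) = t
      · exact Or.inr (Or.inr (hsym _ hy))
    · simp only [Finset.mem_insert]
      push_neg
      exact ⟨Ne.symm ht0, Ne.symm htn0, h0⟩
    · rw [Finset.disjoint_left]
      intro x hx
      simp only [Finset.mem_insert] at hx
      rcases hx with rfl | rfl | hx
      · exact htB
      · exact htnB
      · exact fun hB => (Finset.disjoint_left.mp hdisj hx) hB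
    · rw [Finset.sum_insert (by simp [htY, htne]), Finset.sum_insert htnY, hsum]
      simp
lemma of_Y (hodd : Odd (Fintype.card A)) (a W : A) (Y : Finset A)
    (h0 : (0 : A) ∉ Y) (hA : a ∉ Y)
    (hT : -∑ y ∈ Y, y ∈ insert (0 : A) (insert a Y))
    (hW : -∑ y ∈ Y, y ≠ W) (ha : a ≠ 0) :
    ∃ X : Finset A, X.card = Fintype.card A - (Y.card + 2) ∧ (0 : A) ∉ X ∧ a ∉ X ∧
      (a + ∑ t ∈ X, t) ∉ X ∧ (a + ∑ t ∈ X, t) ≠ W := by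
  have h0' : (0 : A) ∉ insert a Y := by
    simp only [Finset.mem_insert]
    push_neg
    exact ⟨fun h => ha h.symm, h0⟩
  set D : Finset A := insert (0 : A) (insert a Y) with hD
  have hDcard : D.card = Y.card + 2 := by
    rw [hD, Finset.card_insert_of_notMem h0', Finset.card_insert_of_notMem hA]
  set X : Finset A := univ \ D with hX
  have hXcard : X.card = Fintype.card A - (Y.card + 2) := by
    rw [hX, Finset.card_sdiff_of_subset (Finset.subset_univ _), Finset.card_univ, hDcard]
  have hsumD : ∑ t ∈ D, t = a + ∑ y ∈ Y, y := by
    rw [hD, Finset.sum_insert h0', Finset.sum_insert hA, zero_add]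
  have hsumX : ∑ t ∈ X, t = -(a + ∑ y ∈ Y, y) := by
    have := Finset.sum_sdiff_eq_sub (f := fun t : A => t) (Finset.subset_univ D)
    rw [hX, this, sum_univ_eq_zero hodd, hsumD, zero_sub]
  have hS : a + ∑ t ∈ X, t = -∑ y ∈ Y, y := by rw [hsumX]; abel
  refine ⟨X, hXcard, ?_, ?_, ?_, ?_⟩
  · simp [hX, hD]
  · simp [hX, hD]
  · rw [hS, hX]
    simp only [Finset.mem_sdiff, Finset.mem_univ, true_and, not_not]
    exact hT
  · rw [hS]; exact hW
lemma lin_eq {X Y L R : A} (h : L = R) (e : X - Y = L - R) : X = Y := by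
  rw [sub_eq_zero.mpr h] at e
  exact sub_eq_zero.mp e

lemma card_half_le (hodd : Odd (Fintype.card A)) (c : A) :
    (univ.filter (fun x : A => x + x = c)).card ≤ 1 :=
  Finset.card_le_one.mpr (fun x hx y hy => by
    simp only [Finset.mem_filter] at hx hy
    exact doubling_inj hodd (hx.2.trans hy.2.symm))

lemma core (hodd : Odd (Fintype.card A)) (hn : 9 ≤ Fintype.card A) (a W : A) (ha : a ≠ 0)
    (k : ℕ) (hk1 : 1 ≤ k) (hk4 : k + 4 ≤ Fintype.card A) :
    ∃ X : Finset A, X.card = k ∧ (0 : A) ∉ X ∧ a ∉ X ∧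
      (a + ∑ t ∈ X, t) ∉ X ∧ (a + ∑ t ∈ X, t) ≠ W := by
  rcases Nat.lt_or_ge k 3 with hk3 | hk3
  · -- k = 1 or k = 2
    interval_cases k
    · -- k = 1
      have hcard : ({0, a, W - a} : Finset A).card < Fintype.card A := by
        have h1 := Finset.card_insert_le (0 : A) ({a, W - a} : Finset A)
        have h2 := Finset.card_insert_le a ({W - a} : Finset A)
        simp only [Finset.card_singleton] at h1 h2
        omega
      obtain ⟨c, hc⟩ := exists_notin _ hcard
      simp only [Finset.mem_insert, Finset.mem_singleton] at hc
      push_neg at hc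
      refine ⟨{c}, by simp, by simp [Ne.symm hc.1], by simp [Ne.symm hc.2.1], ?_, ?_⟩
      · simp only [Finset.sum_singleton, Finset.mem_singleton]
        intro h
        exact ha (lin_eq h (by abel))
      · simp only [Finset.sum_singleton]
        intro h
        exact hc.2.2 (lin_eq h (by abel))
    · -- k = 2
      have hc1 : ({0, a, -a} : Finset A).card < Fintype.card A := by
        have h1 := Finset.card_insert_le (0 : A) ({a, -a} : Finset A)
        have h2 := Finset.card_insert_le a ({-a} : Finset A)
        simp only [Finset.card_singleton] at h1 h2
        omega
      obtain ⟨c, hc⟩ := exists_notin _ hc1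
      simp only [Finset.mem_insert, Finset.mem_singleton] at hc
      push_neg at hc
      obtain ⟨hc0, hca, hcna⟩ := hc
      have hc2 : ({0, a, -a, c, W - a - c} : Finset A).card < Fintype.card A := by
        have h1 := Finset.card_insert_le (0 : A) ({a, -a, c, W - a - c} : Finset A)
        have h2 := Finset.card_insert_le a ({-a, c, W - a - c} : Finset A)
        have h3 := Finset.card_insert_le (-a) ({c, W - a - c} : Finset A)
        have h4 := Finset.card_insert_le c ({W - a - c} : Finset A)
        simp only [Finset.card_singleton] at h1 h2 h3 h4
        omega
      obtain ⟨d, hd⟩ := exists_notin _ hc2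
      simp only [Finset.mem_insert, Finset.mem_singleton] at hd
      push_neg at hd
      obtain ⟨hd0, hda, hdna, hdc, hdw⟩ := hd
      have hsum : ∑ t ∈ ({c, d} : Finset A), t = c + d := by
        rw [Finset.sum_insert (by simp [Ne.symm hdc]), Finset.sum_singleton]
      refine ⟨{c, d}, ?_, ?_, ?_, ?_, ?_⟩
      · rw [Finset.card_insert_of_notMem (by simp [Ne.symm hdc]), Finset.card_singleton]
      · simp [Ne.symm hc0, Ne.symm hd0]
      · simp [Ne.symm hca, Ne.symm hda]
      · rw [hsum]
        simp only [Finset.mem_insert, Finset.mem_singleton]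
        push_neg
        constructor
        · intro h
          exact hdna (lin_eq h (by abel))
        · intro h
          exact hcna (lin_eq h (by abel))
      · rw [hsum]
        intro h
        exact hdw (lin_eq h (by abel))
  · -- k ≥ 3
    set n := Fintype.card A with hnn
    have hr : 2 ≤ n - 2 - k ∧ (n - 2 - k) + 2 + k = n ∧ (n - 2 - k) + 5 ≤ n := by omega
    set r := n - 2 - k with hrr
    obtain ⟨hr2, hrk, hr5⟩ := hr
    rcases Nat.even_or_odd r with hre | hro
    · obtain ⟨j, hj⟩ := hre
      by_cases hW0 : W = 0
      · -- r even, W = 0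
        have hj1 : 1 ≤ j := by omega
        have hhalf := card_half_le hodd (-a)
        have hcF : (({0, a, -a, -(a + a)} : Finset A) ∪
            univ.filter (fun x : A => x + x = -a)).card < Fintype.card A := by
          have h0 := Finset.card_union_le ({0, a, -a, -(a + a)} : Finset A)
            (univ.filter (fun x : A => x + x = -a))
          have h1 := Finset.card_insert_le (0 : A) ({a, -a, -(a + a)} : Finset A)
          have h2 := Finset.card_insert_le a ({-a, -(a + a)} : Finset A)
          have h3 := Finset.card_insert_le (-a) ({-(a + a)} : Finset A)
          simp only [Finset.card_singleton] at h1 h2 h3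
          omega
        obtain ⟨u, hu⟩ := exists_notin _ hcF
        simp only [Finset.mem_union, Finset.mem_insert, Finset.mem_singleton,
          Finset.mem_filter, Finset.mem_univ, true_and] at hu
        push_neg at hu
        obtain ⟨⟨hu0, hua, huna, hu2a⟩, huh⟩ := hu
        set v : A := -a - u with hv
        have hvu : v ≠ u := by
          intro h
          exact huh (by rw [hv] at h; exact lin_eq h.symm (by abel))
        have hv0 : v ≠ 0 := by
          intro h; exact huna (by rw [hv] at h; exact lin_eq h.symm (by abel))
        have hva : v ≠ a := by
          intro h; exact hu2a (by rw [hv] at h; exact lin_eq h.symm (by abel))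
        obtain ⟨P, hPc, hPsym, hP0, hPdisj, hPsum⟩ :=
          sym_pairs hodd ({a, u, v} : Finset A) (j - 1) (by
            have h1 := Finset.card_insert_le a ({u, v} : Finset A)
            have h2 := Finset.card_insert_le u ({v} : Finset A)
            simp only [Finset.card_singleton] at h1 h2
            omega)
        have haP : a ∉ P := fun h => (Finset.disjoint_left.mp hPdisj h) (by simp)
        have huP : u ∉ P := fun h => (Finset.disjoint_left.mp hPdisj h) (by simp)
        have hvP : v ∉ P := fun h => (Finset.disjoint_left.mp hPdisj h) (by simp)
        set Y : Finset A := insert u (insert v P) with hY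
        have hYc : Y.card = r := by
          rw [hY, Finset.card_insert_of_notMem (by simp [hvu.symm, huP]),
            Finset.card_insert_of_notMem hvP, hPc]
          omega
        have hYsum : ∑ y ∈ Y, y = -a := by
          rw [hY, Finset.sum_insert (by simp [hvu.symm, huP]), Finset.sum_insert hvP,
            hPsum, hv]
          abel
        obtain ⟨X, hXc, hX0, hXa, hXS, hXW⟩ := of_Y hodd a W Y
          (by simp [hY, Ne.symm hu0, Ne.symm hv0, hP0])
          (by simp [hY, Ne.symm hua, Ne.symm hva, haP])
          (by rw [hYsum]; simp) (by rw [hYsum, hW0]; simpa using ha) ha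
        exact ⟨X, by omega, hX0, hXa, hXS, hXW⟩
      · -- r even, W ≠ 0
        obtain ⟨Y, hYc, hYsym, hY0, hYdisj, hYsum⟩ :=
          sym_pairs hodd ({a} : Finset A) j (by simp only [Finset.card_singleton]; omega)
        have haY : a ∉ Y := fun h => (Finset.disjoint_left.mp hYdisj h) (by simp)
        obtain ⟨X, hXc, hX0, hXa, hXS, hXW⟩ := of_Y hodd a W Y hY0 haY
          (by rw [hYsum]; simp) (by rw [hYsum]; simpa using Ne.symm hW0) ha
        exact ⟨X, by omega, hX0, hXa, hXS, hXW⟩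
    · obtain ⟨j, hj⟩ := hro
      by_cases hWa : W = a
      · -- r odd, W = a
        have hj1 : 1 ≤ j := by omega
        have hr6 : r + 6 ≤ n := by
          rcases Nat.lt_or_ge (r + 5) n with h | h
          · omega
          · exfalso
            have : r + 5 = n := by omega
            rw [Nat.odd_iff] at hodd
            omega
        have hcu : ({0, a} : Finset A).card < Fintype.card A := by
          have h1 := Finset.card_insert_le (0 : A) ({a} : Finset A)
          simp only [Finset.card_singleton] at h1
          omega
        obtain ⟨u, hu⟩ := exists_notin _ hcu
        simp only [Finset.mem_insert, Finset.mem_singleton] at hu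
        push_neg at hu
        obtain ⟨hu0, hua⟩ := hu
        have hcv : ({0, a, u, -u, -(u + u), -(u + u) - a, -(u + u + u)} : Finset A).card
            < Fintype.card A := by
          have h1 := Finset.card_insert_le (0 : A)
            ({a, u, -u, -(u + u), -(u + u) - a, -(u + u + u)} : Finset A)
          have h2 := Finset.card_insert_le a
            ({u, -u, -(u + u), -(u + u) - a, -(u + u + u)} : Finset A)
          have h3 := Finset.card_insert_le u
            ({-u, -(u + u), -(u + u) - a, -(u + u + u)} : Finset A)
          have h4 := Finset.card_insert_le (-u)
            ({-(u + u), -(u + u) - a, -(u + u + u)} : Finset A)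
          have h5 := Finset.card_insert_le (-(u + u))
            ({-(u + u) - a, -(u + u + u)} : Finset A)
          have h6 := Finset.card_insert_le (-(u + u) - a) ({-(u + u + u)} : Finset A)
          simp only [Finset.card_singleton] at h1 h2 h3 h4 h5 h6
          omega
        obtain ⟨v, hv⟩ := exists_notin _ hcv
        simp only [Finset.mem_insert, Finset.mem_singleton] at hv
        push_neg at hv
        obtain ⟨hv0, hva, hvu, hvnu, hv2u, hv2ua, hv3u⟩ := hv
        set w : A := -(u + u) - v with hw
        have hw0 : w ≠ 0 := fun h => hv2u (by rw [hw] at h; exact lin_eq h.symm (by abel))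
        have hwa : w ≠ a := fun h => hv2ua (by rw [hw] at h; exact lin_eq h.symm (by abel))
        have hwu : w ≠ u := fun h => hv3u (by rw [hw] at h; exact lin_eq h.symm (by abel))
        have hwv : w ≠ v := by
          intro h
          apply hvnu
          have : v + v = (-u) + (-u) := by rw [hw] at h; exact lin_eq h.symm (by abel)
          exact doubling_inj hodd this
        obtain ⟨P, hPc, hPsym, hP0, hPdisj, hPsum⟩ :=
          sym_pairs hodd ({a, u, v, w} : Finset A) (j - 1) (by
            have h1 := Finset.card_insert_le a ({u, v, w} : Finset A)
            have h2 := Finset.card_insert_le u ({v, w} : Finset A)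
            have h3 := Finset.card_insert_le v ({w} : Finset A)
            simp only [Finset.card_singleton] at h1 h2 h3
            omega)
        have haP : a ∉ P := fun h => (Finset.disjoint_left.mp hPdisj h) (by simp)
        have huP : u ∉ P := fun h => (Finset.disjoint_left.mp hPdisj h) (by simp)
        have hvP : v ∉ P := fun h => (Finset.disjoint_left.mp hPdisj h) (by simp)
        have hwP : w ∉ P := fun h => (Finset.disjoint_left.mp hPdisj h) (by simp)
        set Y : Finset A := insert u (insert v (insert w P)) with hY
        have hmemv : v ∉ insert w P := by simp [hwv.symm, hvP]
        have hmemu : u ∉ insert v (insert w P) := by simp [hvu.symm, hwu.symm, huP]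
        have hYc : Y.card = r := by
          rw [hY, Finset.card_insert_of_notMem hmemu, Finset.card_insert_of_notMem hmemv,
            Finset.card_insert_of_notMem hwP, hPc]
          omega
        have hYsum : ∑ y ∈ Y, y = -u := by
          rw [hY, Finset.sum_insert hmemu, Finset.sum_insert hmemv, Finset.sum_insert hwP,
            hPsum, hw]
          abel
        obtain ⟨X, hXc, hX0, hXa, hXS, hXW⟩ := of_Y hodd a W Y
          (by simp [hY, Ne.symm hu0, Ne.symm hv0, Ne.symm hw0, hP0])
          (by simp [hY, Ne.symm hua, Ne.symm hva, Ne.symm hwa, haP])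
          (by rw [hYsum, neg_neg]; simp [hY]) (by rw [hYsum, neg_neg, hWa]; exact hua) ha
        exact ⟨X, by omega, hX0, hXa, hXS, hXW⟩
      · -- r odd, W ≠ a
        obtain ⟨P, hPc, hPsym, hP0, hPdisj, hPsum⟩ :=
          sym_pairs hodd ({a, -a} : Finset A) j (by
            have h1 := Finset.card_insert_le a ({-a} : Finset A)
            simp only [Finset.card_singleton] at h1
            omega)
        have haP : a ∉ P := fun h => (Finset.disjoint_left.mp hPdisj h) (by simp)
        have hnaP : -a ∉ P := fun h => (Finset.disjoint_left.mp hPdisj h) (by simp)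
        have hana : a ≠ -a := by
          intro h
          exact ha (no2tor hodd (by nth_rewrite 2 [h]; simp))
        set Y : Finset A := insert (-a) P with hY
        have hYc : Y.card = r := by
          rw [hY, Finset.card_insert_of_notMem hnaP, hPc]; omega
        have hYsum : ∑ y ∈ Y, y = -a := by
          rw [hY, Finset.sum_insert hnaP, hPsum]; abel
        obtain ⟨X, hXc, hX0, hXa, hXS, hXW⟩ := of_Y hodd a W Y
          (by simp [hY, hP0]; exact fun h => ha h)
          (by simp [hY, hana, haP])
          (by rw [hYsum, neg_neg]; simp) (by rw [hYsum, neg_neg]; exact Ne.symm hWa) ha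
        exact ⟨X, by omega, hX0, hXa, hXS, hXW⟩
end GroupLemmas

section TreeDefs

variable {V : Type} [Fintype V] [DecidableEq V]

/-- The children of `u` w.r.t. a root `r` and parent map `par`. -/
def children (T : SimpleGraph V) [DecidableRel T.Adj] (r : V) (par : V → V) (u : V) :
    Finset V :=
  (T.neighborFinset u).filter (fun v => v ≠ r ∧ par v = u)

variable {A : Type} [AddCommGroup A] [Fintype A] [DecidableEq A]

/-- Read off the label of the edge from `v` to its parent `p`, given the label set `X` at `p`. -/
noncomputable def labOf (T : SimpleGraph V) [DecidableRel T.Adj] (r : V) (par : V → V)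
    (p : V) (X : Finset A) (v : V) : A :=
  if h : (children T r par p).card = X.card ∧ v ∈ children T r par p then
    ((Fintype.equivOfCardEq (by simpa only [Fintype.card_coe] using h.1) :
      (children T r par p : Type) ≃ (X : Type)) ⟨v, h.2⟩ : X)
  else 0

lemma labOf_mem (T : SimpleGraph V) [DecidableRel T.Adj] (r : V) (par : V → V)
    (p : V) (X : Finset A) (v : V) (h1 : (children T r par p).card = X.card)
    (h2 : v ∈ children T r par p) : labOf T r par p X v ∈ X := by
  rw [labOf, dif_pos ⟨h1, h2⟩]
  exact Finset.coe_mem _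

lemma labOf_inj (T : SimpleGraph V) [DecidableRel T.Adj] (r : V) (par : V → V)
    (p : V) (X : Finset A) (v v' : V) (h1 : (children T r par p).card = X.card)
    (h2 : v ∈ children T r par p) (h2' : v' ∈ children T r par p)
    (he : labOf T r par p X v = labOf T r par p X v') : v = v' := by
  simp only [labOf] at he
  rw [dif_pos ⟨h1, h2⟩, dif_pos ⟨h1, h2'⟩] at he
  have := (Fintype.equivOfCardEq (by simpa only [Fintype.card_coe] using h1) :
      (children T r par p : Type) ≃ (X : Type)).injective
      (Subtype.ext (by exact_mod_cast he))
  exact congrArg Subtype.val this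

lemma labOf_sum (T : SimpleGraph V) [DecidableRel T.Adj] (r : V) (par : V → V)
    (p : V) (X : Finset A) (h1 : (children T r par p).card = X.card) :
    ∑ c ∈ children T r par p, labOf T r par p X c = ∑ t ∈ X, t := by
  rw [← Finset.sum_attach (children T r par p) (fun c => labOf T r par p X c)]
  have hval : ∀ c : (children T r par p : Type),
      labOf T r par p X c =
      ((Fintype.equivOfCardEq (by simpa only [Fintype.card_coe] using h1) :
        (children T r par p : Type) ≃ (X : Type)) c : A) := by
    intro c
    rw [labOf, dif_pos ⟨h1, c.2⟩]
  rw [Finset.sum_congr rfl (fun c _ => hval c)]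
  rw [← Finset.sum_coe_sort X (fun t => t)]
  exact Fintype.sum_equiv _ _ _ (fun c => rfl)

/-- The recursively-chosen label sets. `Xset … u` is the set of labels used on edges
from `u` to its children. -/
noncomputable def Xset (T : SimpleGraph V) [DecidableRel T.Adj] (r : V) (par : V → V)
    (dep : V → ℕ) (hdep : ∀ u, u ≠ r → dep (par u) < dep u)
    (A : Type) [AddCommGroup A] [Fintype A] [DecidableEq A]
    (hodd : Odd (Fintype.card A)) (hn : 9 ≤ Fintype.card A) (g0 : A) (u : V) : Finset A :=
  if hu : u = r then {g0}
  else
    if h : (labOf T r par (par u) (Xset T r par dep hdep A hodd hn g0 (par u)) u ≠ 0 ∧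
        1 ≤ (children T r par u).card ∧ (children T r par u).card + 4 ≤ Fintype.card A)
    then
      (core hodd hn (labOf T r par (par u) (Xset T r par dep hdep A hodd hn g0 (par u)) u)
        ((if hp : par u = r then 0
          else labOf T r par (par (par u)) (Xset T r par dep hdep A hodd hn g0 (par (par u))) (par u))
          + ∑ t ∈ Xset T r par dep hdep A hodd hn g0 (par u), t)
        h.1 (children T r par u).card h.2.1 h.2.2).choose
    else ∅
termination_by dep u
decreasing_by
  all_goals first
    | exact hdep u hu
    | exact Nat.lt_trans (hdep (par u) hp) (hdep u hu)

end TreeDefs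
section Build

variable {V : Type} [Fintype V] [DecidableEq V]
  {A : Type} [AddCommGroup A] [Fintype A] [DecidableEq A]
  (T : SimpleGraph V) [DecidableRel T.Adj] (r : V) (par : V → V) (dep : V → ℕ)
  (hdep : ∀ u, u ≠ r → dep (par u) < dep u)
  (hodd : Odd (Fintype.card A)) (hn : 9 ≤ Fintype.card A) (g0 : A)

local notation "XS" => Xset T r par dep hdep A hodd hn g0
local notation "CH" => children T r par

/-- The label of the edge from `v` to its parent. -/
noncomputable def lab (v : V) : A := labOf T r par (par v) (XS (par v)) v

local notation "LB" => lab T r par dep hdep hodd hn g0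

/-- The weight of a vertex. -/
noncomputable def wgt (u : V) : A := (if u = r then 0 else LB u) + ∑ t ∈ XS u, t

local notation "WG" => wgt T r par dep hdep hodd hn g0

lemma Xset_root : XS r = {g0} := by
  conv_lhs => rw [Xset]
  simp

lemma Xset_ne (u : V) (hu : u ≠ r) :
    XS u = if h : (LB u ≠ 0 ∧
        1 ≤ (CH u).card ∧ (CH u).card + 4 ≤ Fintype.card A)
    then
      (core hodd hn (LB u)
        ((if hp : par u = r then 0 else LB (par u)) + ∑ t ∈ XS (par u), t)
        h.1 (CH u).card h.2.1 h.2.2).choose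
    else ∅ := by
  conv_lhs => rw [Xset]
  rw [dif_neg hu]
  rfl
/-- The main invariant, proved by strong induction on depth. -/
lemma INV (hg0 : g0 ≠ 0)
    (hmem : ∀ u, u ≠ r → u ∈ CH (par u))
    (hcard4 : ∀ u, u ≠ r → (CH u).card + 4 ≤ Fintype.card A)
    (hroot1 : (CH r).card = 1)
    (hrootch : ∀ u, u ≠ r → par u = r → (CH u).Nonempty) : ∀ u : V,
    ((XS u).card = (CH u).card ∧ (0 : A) ∉ XS u) ∧
    (u ≠ r → LB u ∈ XS (par u) ∧ LB u ∉ XS u ∧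
      LB u + ∑ t ∈ XS u, t ∉ XS u ∧
      LB u + ∑ t ∈ XS u, t ≠ WG (par u)) := by
  suffices H : ∀ n : ℕ, ∀ u : V, dep u ≤ n →
      ((XS u).card = (CH u).card ∧ (0 : A) ∉ XS u) ∧
      (u ≠ r → LB u ∈ XS (par u) ∧ LB u ∉ XS u ∧
        LB u + ∑ t ∈ XS u, t ∉ XS u ∧
        LB u + ∑ t ∈ XS u, t ≠ WG (par u)) by
    exact fun u => H (dep u) u le_rfl
  intro n
  induction n with
  | zero =>
    intro u hu0
    rcases eq_or_ne u r with rfl | hur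
    · refine ⟨⟨?_, ?_⟩, fun h => absurd rfl h⟩
      · rw [Xset_root, hroot1, Finset.card_singleton]
      · rw [Xset_root]
        simp [Ne.symm hg0]
    · exact absurd (Nat.lt_of_lt_of_le (hdep u hur) hu0) (Nat.not_lt_zero _)
  | succ n ih =>
    intro u hdn
    rcases eq_or_ne u r with rfl | hur
    · refine ⟨⟨?_, ?_⟩, fun h => absurd rfl h⟩
      · rw [Xset_root, hroot1, Finset.card_singleton]
      · rw [Xset_root]
        simp [Ne.symm hg0]
    · -- u ≠ r
      have hpdep : dep (par u) ≤ n := by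
        have := hdep u hur
        omega
      obtain ⟨⟨hp1, hp2⟩, hpr⟩ := ih (par u) hpdep
      -- the label of u is well-defined and lies in XS (par u)
      have hxu : LB u ∈ XS (par u) :=
        labOf_mem T r par (par u) (XS (par u)) u hp1.symm (hmem u hur)
      have hxu0 : LB u ≠ 0 := fun h => hp2 (h ▸ hxu)
      rcases Finset.eq_empty_or_nonempty (CH u) with hch | hch
      · -- u is a leaf
        have hXe : XS u = ∅ := by
          rw [Xset_ne T r par dep hdep hodd hn g0 u hur, dif_neg]
          rw [hch]
          simp
        refine ⟨⟨by rw [hXe, hch]; simp, by rw [hXe]; exact Finset.notMem_empty _⟩,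
          fun _ => ⟨hxu, by rw [hXe]; exact Finset.notMem_empty _,
            by rw [hXe]; exact Finset.notMem_empty _, ?_⟩⟩
        rw [hXe, Finset.sum_empty, add_zero, wgt]
        rcases eq_or_ne (par u) r with hpar | hpar
        · exact absurd hch (Finset.nonempty_iff_ne_empty.mp (hrootch u hur hpar))
        · rw [if_neg hpar]
          intro hEq
          exact (hpr hpar).2.2.1 (hEq ▸ hxu)
      · -- u has children
        have hcond : LB u ≠ 0 ∧
            1 ≤ (CH u).card ∧ (CH u).card + 4 ≤ Fintype.card A :=
          ⟨hxu0, Finset.card_pos.mpr hch, hcard4 u hur⟩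
        have hXu : XS u =
            (core hodd hn (LB u)
              ((if hp : par u = r then 0 else LB (par u)) + ∑ t ∈ XS (par u), t)
              hcond.1 (CH u).card hcond.2.1 hcond.2.2).choose := by
          rw [Xset_ne T r par dep hdep hodd hn g0 u hur, dif_pos hcond]
        have hspec := (core hodd hn (LB u)
              ((if hp : par u = r then 0 else LB (par u)) + ∑ t ∈ XS (par u), t)
              hcond.1 (CH u).card hcond.2.1 hcond.2.2).choose_spec
        rw [← hXu] at hspec
        obtain ⟨hc1, hc2, hc3, hc4, hc5⟩ := hspec
        refine ⟨⟨hc1, hc2⟩, fun _ => ⟨hxu, hc3, hc4, ?_⟩⟩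
        rw [wgt]
        convert hc5 using 2 <;> split_ifs <;> rfl
  

end Build
open SimpleGraph

/-- If `T` is a tree with even maximum degree `Δ(T) ≥ 6`, then for every Abelian group
`𝒢` of odd order `|𝒢| ≥ Δ(T) + 3` there exists a nowhere-zero `𝒢`-twin edge coloring
of `T`. -/
theorem tree_nowhere_zero_twin_coloring_of_even {V : Type} [Fintype V] (T : SimpleGraph V)
    [DecidableRel T.Adj] (hT : T.IsTree) (heven : Even T.maxDegree)
    (hΔ : 6 ≤ T.maxDegree)
    (A : Type) [AddCommGroup A] [Fintype A] (hodd : Odd (Fintype.card A))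
    (hcard : T.maxDegree + 3 ≤ Fintype.card A) :
    ∃ f : Sym2 V → A, IsTwinEdgeColoring T f ∧ ∀ e ∈ T.edgeSet, f e ≠ 0 := by
  classical
  have hconn := hT.isConnected
  haveI : Nonempty V := hconn.nonempty
  have hn : 9 ≤ Fintype.card A := le_trans (by omega) hcard
  obtain ⟨m, hm⟩ := T.exists_maximal_degree_vertex
  have hm6 : 6 ≤ T.degree m := hm ▸ hΔ
  have hV2 : 2 ≤ Fintype.card V := by
    have := T.degree_lt_card_verts m
    omega
  have hdegpos : ∀ v : V, 0 < T.degree v := by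
    intro v
    rw [T.degree_pos_iff_exists_adj v]
    obtain ⟨w, hw⟩ := Fintype.exists_ne_of_one_lt_card (by omega) v
    obtain ⟨q⟩ := hconn.preconnected w v
    have hq : ¬ q.reverse.Nil := SimpleGraph.Walk.not_nil_of_ne (Ne.symm hw)
    exact ⟨_, SimpleGraph.Walk.adj_snd hq⟩
  -- a leaf exists
  have hleaf : ∃ v : V, T.degree v = 1 := by
    by_contra hc
    push_neg at hc
    have hge2 : ∀ v : V, 2 ≤ T.degree v := by
      intro v
      have h1 := hdegpos v
      have h2 := hc v
      omega
    have hsum := T.sum_degrees_eq_twice_card_edges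
    have hedge := hT.card_edgeFinset
    have : 2 * Fintype.card V ≤ ∑ v : V, T.degree v := by
      calc 2 * Fintype.card V = ∑ _v : V, 2 := by
            rw [Finset.sum_const, Finset.card_univ]; ring
        _ ≤ ∑ v : V, T.degree v := Finset.sum_le_sum (fun v _ => hge2 v)
    omega
  obtain ⟨r, hr⟩ := hleaf
  have hup : ∀ u v : V, ∃! p : T.Walk u v, p.IsPath :=
    (SimpleGraph.isTree_iff_existsUnique_path.mp hT).2
  let pth : ∀ u : V, T.Walk u r := fun u => (hup u r).choose
  have hpth : ∀ u : V, (pth u).IsPath := fun u => (hup u r).choose_spec.1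
  have hpuniq : ∀ (u : V) (q : T.Walk u r), q.IsPath → q = pth u :=
    fun u q hq => (hup u r).choose_spec.2 q hq
  let par : V → V := fun u => (pth u).getVert 1
  let dep : V → ℕ := fun u => (pth u).length
  have hpth_r : pth r = SimpleGraph.Walk.nil := (hpuniq r SimpleGraph.Walk.nil (by simp)).symm
  have hnil : ∀ u : V, u ≠ r → ¬(pth u).Nil := fun u hu => SimpleGraph.Walk.not_nil_of_ne hu
  have hadjpar : ∀ u : V, u ≠ r → T.Adj u (par u) :=
    fun u hu => SimpleGraph.Walk.adj_snd (hnil u hu)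
  have htail : ∀ (u : V), u ≠ r → pth (par u) = (pth u).tail :=
    fun u hu => (hpuniq (par u) ((pth u).tail) ((hpth u).tail)).symm
  have hdep : ∀ u : V, u ≠ r → dep (par u) < dep u := by
    intro u hu
    have h1 := SimpleGraph.Walk.length_tail_add_one (hnil u hu)
    have h2 : dep (par u) = (pth u).tail.length := by
      show (pth (par u)).length = _
      rw [htail u hu]
    show dep (par u) < (pth u).length
    omega
  -- vertices on the path to the root have smaller depth
  have hdrop : ∀ u v : V, u ≠ v → u ∈ (pth v).support → dep u < dep v := by
    intro u v huv hmem
    have hdu : pth u = (pth v).dropUntil u hmem :=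
      (hpuniq u _ ((hpth v).dropUntil hmem)).symm
    have hspec := SimpleGraph.Walk.take_spec (pth v) hmem
    have hlen := congrArg SimpleGraph.Walk.length hspec
    rw [SimpleGraph.Walk.length_append] at hlen
    have htake : ((pth v).takeUntil u hmem).length ≠ 0 := by
      intro h0
      exact huv (SimpleGraph.Walk.eq_of_length_eq_zero h0).symm
    show (pth u).length < (pth v).length
    rw [hdu]
    omega
  -- every edge is a parent-child edge
  have hL3 : ∀ u v : V, T.Adj u v → (u ≠ r ∧ par u = v) ∨ (v ≠ r ∧ par v = u) := by
    intro u v huv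
    by_cases hmem : u ∈ (pth v).support
    · right
      have hvn : v ∉ (pth u).support := by
        intro hvm
        have h1 := hdrop u v huv.ne hmem
        have h2 := hdrop v u (huv.ne.symm) hvm
        omega
      have hpthv : pth v = SimpleGraph.Walk.cons huv.symm (pth u) :=
        (hpuniq v _ ((SimpleGraph.Walk.cons_isPath_iff huv.symm (pth u)).mpr
          ⟨hpth u, hvn⟩)).symm
      constructor
      · intro hvr
        subst hvr
        rw [hpth_r] at hpthv
        have := congrArg SimpleGraph.Walk.length hpthv
        simp at this
      · show (pth v).getVert 1 = u
        rw [hpthv, SimpleGraph.Walk.getVert_cons_succ, SimpleGraph.Walk.getVert_zero]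
    · left
      have hpthu : pth u = SimpleGraph.Walk.cons huv (pth v) :=
        (hpuniq u _ ((SimpleGraph.Walk.cons_isPath_iff huv (pth v)).mpr
          ⟨hpth v, hmem⟩)).symm
      constructor
      · intro hur
        subst hur
        rw [hpth_r] at hpthu
        have := congrArg SimpleGraph.Walk.length hpthu
        simp at this
      · show (pth u).getVert 1 = v
        rw [hpthu, SimpleGraph.Walk.getVert_cons_succ, SimpleGraph.Walk.getVert_zero]
  -- facts about children
  have hmem5 : ∀ u : V, u ≠ r → u ∈ children T r par (par u) := by
    intro u hu
    rw [children, Finset.mem_filter, SimpleGraph.mem_neighborFinset]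
    exact ⟨(hadjpar u hu).symm, hu, rfl⟩
  have hparnotch : ∀ u : V, u ≠ r → par u ∉ children T r par u := by
    intro u hu hmem
    rw [children, Finset.mem_filter] at hmem
    obtain ⟨-, hpr, hpp⟩ := hmem
    have h1 := hdep u hu
    have h2 := hdep (par u) hpr
    rw [hpp] at h2
    omega
  have hnbr : ∀ u : V, u ≠ r → T.neighborFinset u = insert (par u) (children T r par u) := by
    intro u hu
    ext v
    rw [Finset.mem_insert, children, Finset.mem_filter, SimpleGraph.mem_neighborFinset]
    constructor
    · intro hadj'
      rcases hL3 u v hadj' with ⟨-, h2⟩ | ⟨h1, h2⟩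
      · exact Or.inl h2.symm
      · exact Or.inr ⟨hadj', h1, h2⟩
    · rintro (rfl | ⟨h1, -⟩)
      · exact hadjpar u hu
      · exact h1
  have hcardch : ∀ u : V, u ≠ r → (children T r par u).card + 1 = T.degree u := by
    intro u hu
    rw [SimpleGraph.degree, hnbr u hu, Finset.card_insert_of_notMem (hparnotch u hu)]
  have hchr : children T r par r = T.neighborFinset r := by
    ext v
    rw [children, Finset.mem_filter, SimpleGraph.mem_neighborFinset]
    constructor
    · rintro ⟨h1, -⟩
      exact h1
    · intro hadj'
      rcases hL3 r v hadj' with ⟨h1, -⟩ | ⟨h1, h2⟩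
      · exact absurd rfl h1
      · exact ⟨hadj', h1, h2⟩
  have hroot1 : (children T r par r).card = 1 := by
    rw [hchr]
    exact hr
  have hcard4 : ∀ u : V, u ≠ r → (children T r par u).card + 4 ≤ Fintype.card A := by
    intro u hu
    have h1 := hcardch u hu
    have h2 := T.degree_le_maxDegree u
    omega
  have hrootch : ∀ u : V, u ≠ r → par u = r → (children T r par u).Nonempty := by
    intro u hu hpu
    rw [Finset.nonempty_iff_ne_empty]
    intro hch
    -- the unique neighbor of r is u
    have hnbrr : T.neighborFinset r = {u} := by
      have hcard1 : (T.neighborFinset r).card = 1 := hr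
      have humem : u ∈ T.neighborFinset r := by
        rw [SimpleGraph.mem_neighborFinset]
        exact (hpu ▸ hadjpar u hu).symm
      obtain ⟨w, hw⟩ := Finset.card_eq_one.mp hcard1
      rw [hw] at humem ⊢
      rw [Finset.mem_singleton] at humem
      rw [humem]
    have hdegu : T.degree u = 1 := by
      rw [← hcardch u hu, hch]
      simp
    have hmner : m ≠ r := by
      intro h
      rw [← h] at hr
      omega
    have hmneu : m ≠ u := by
      intro h
      rw [← h] at hdegu
      omega
    -- every vertex other than r either is u or witnesses a child of u
    have hclaim : ∀ n : ℕ, ∀ v : V, dep v ≤ n → v ≠ r →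
        v = u ∨ (children T r par u).Nonempty := by
      intro n
      induction n with
      | zero =>
        intro v hv0 hvr
        exact absurd (Nat.lt_of_lt_of_le (hdep v hvr) hv0) (Nat.not_lt_zero _)
      | succ n ih =>
        intro v hvn hvr
        by_cases hpv : par v = r
        · left
          have : v ∈ T.neighborFinset r := by
            rw [SimpleGraph.mem_neighborFinset]
            exact (hpv ▸ hadjpar v hvr).symm
          rw [hnbrr, Finset.mem_singleton] at this
          exact this
        · have hdv := hdep v hvr
          rcases ih (par v) (by omega) hpv with hvu | hne
          · right
            refine ⟨v, ?_⟩
            rw [← hvu]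
            exact hmem5 v hvr
          · right
            exact hne
    rcases hclaim (dep m) m le_rfl hmner with h | h
    · exact hmneu h
    · rw [Finset.nonempty_iff_ne_empty] at h
      exact h hch
  -- now build the coloring
  haveI : Nontrivial A := Fintype.one_lt_card_iff_nontrivial.mp (by omega)
  obtain ⟨g0, hg0⟩ := exists_ne (0 : A)
  let x : V → A := lab T r par dep hdep hodd hn g0
  let XF : V → Finset A := Xset T r par dep hdep A hodd hn g0
  let wg : V → A := wgt T r par dep hdep hodd hn g0
  have hI : ∀ u : V, ((XF u).card = (children T r par u).card ∧ (0 : A) ∉ XF u) ∧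
      (u ≠ r → x u ∈ XF (par u) ∧ x u ∉ XF u ∧
        x u + ∑ t ∈ XF u, t ∉ XF u ∧
        x u + ∑ t ∈ XF u, t ≠ wg (par u)) :=
    INV T r par dep hdep hodd hn g0 hg0 hmem5 hcard4 hroot1 hrootch
  have hwgt : ∀ u : V, wg u = (if u = r then 0 else x u) + ∑ t ∈ XF u, t := fun u => rfl
  have hxlab : ∀ c : V, x c = labOf T r par (par c) (XF (par c)) c := fun c => rfl
  have hxmem : ∀ v : V, v ≠ r → x v ∈ XF (par v) := fun v hv => ((hI v).2 hv).1
  have hx0 : ∀ v : V, v ≠ r → x v ≠ 0 := fun v hv h => ((hI (par v)).1.2) (h ▸ hxmem v hv)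
  have hnopp : ∀ u v : V, u ≠ r → par u = v → v ≠ r → par v = u → False := by
    intro u v hu hpu hv hpv
    have d1 := hdep u hu
    have d2 := hdep v hv
    rw [hpu] at d1
    rw [hpv] at d2
    omega
  -- the edge labeling
  let gfun : V → V → A := fun u v =>
    if u ≠ r ∧ par u = v then x u else if v ≠ r ∧ par v = u then x v else 0
  have hgsym : ∀ u v : V, gfun u v = gfun v u := by
    intro u v
    simp only [gfun]
    split_ifs with h1 h2 h2
    · exact absurd (hnopp u v h1.1 h1.2 h2.1 h2.2) not_false
    · rfl
    · rfl
    · rfl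
  let f : Sym2 V → A := Sym2.lift ⟨gfun, hgsym⟩
  have hf : ∀ u v : V, f s(u, v) = gfun u v := fun u v => rfl
  have hfe : ∀ u : V, u ≠ r → f s(u, par u) = x u := by
    intro u hu
    rw [hf]
    simp only [gfun]
    simp [hu]
  have hfc : ∀ u v : V, v ≠ r → par v = u → f s(u, v) = x v := by
    intro u v hv hp
    rw [hf]
    simp only [gfun]
    by_cases h1 : u ≠ r ∧ par u = v
    · exact absurd (hnopp u v h1.1 h1.2 hv hp) not_false
    · rw [if_neg h1, if_pos ⟨hv, hp⟩]
  have hchild_mem : ∀ u v : V, T.Adj u v → v ≠ r → par v = u →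
      v ∈ children T r par u := by
    intro u v hadj' hv hp
    rw [children, Finset.mem_filter, SimpleGraph.mem_neighborFinset]
    exact ⟨hadj', hv, hp⟩
  -- sum over children equals sum over the label set
  have hsumch : ∀ u : V, ∑ c ∈ children T r par u, x c = ∑ t ∈ XF u, t := by
    intro u
    have hcong : ∀ c ∈ children T r par u, x c = labOf T r par u (XF u) c := by
      intro c hc
      have hpc : par c = u := (Finset.mem_filter.mp hc).2.2
      rw [hxlab c, hpc]
    rw [Finset.sum_congr rfl hcong]
    exact labOf_sum T r par u (XF u) (hI u).1.1.symm
  -- weights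
  have hwsum : ∀ u : V, ∑ y ∈ T.neighborFinset u, f s(y, u) = wg u := by
    intro u
    rcases eq_or_ne u r with h | hu
    · rw [h, ← hchr]
      have hcong : ∀ c ∈ children T r par r, f s(c, r) = x c := by
        intro c hc
        obtain ⟨hcm, hc1, hc2⟩ := Finset.mem_filter.mp hc
        rw [Sym2.eq_swap]
        exact hfc r c hc1 hc2
      rw [Finset.sum_congr rfl hcong, hsumch r, hwgt r, if_pos rfl, zero_add]
    · rw [hnbr u hu, Finset.sum_insert (hparnotch u hu)]
      have h1 : f s(par u, u) = x u := by
        rw [Sym2.eq_swap]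
        exact hfe u hu
      have hcong : ∀ c ∈ children T r par u, f s(c, u) = x c := by
        intro c hc
        obtain ⟨hcm, hc1, hc2⟩ := Finset.mem_filter.mp hc
        rw [Sym2.eq_swap]
        exact hfc u c hc1 hc2
      rw [h1, Finset.sum_congr rfl hcong, hsumch u, hwgt u, if_neg hu]
  refine ⟨f, ⟨?_, ?_⟩, ?_⟩
  · -- proper edge coloring
    intro u v w huv huw hvw
    rcases hL3 u v huv with ⟨hur, hpv⟩ | ⟨hvr, hpv⟩ <;>
      rcases hL3 u w huw with ⟨hur2, hpw⟩ | ⟨hwr, hpw⟩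
    · exact absurd (hpv.symm.trans hpw) hvw
    · have e1 : f s(u, v) = x u := by rw [← hpv]; exact hfe u hur
      have e2 : f s(u, w) = x w := hfc u w hwr hpw
      rw [e1, e2]
      intro h
      have hxw : x w ∈ XF u := by
        have := hxmem w hwr
        rwa [hpw] at this
      exact ((hI u).2 hur).2.1 (h ▸ hxw)
    · have e1 : f s(u, v) = x v := hfc u v hvr hpv
      have e2 : f s(u, w) = x u := by rw [← hpw]; exact hfe u hur2
      rw [e1, e2]
      intro h
      have hxv : x v ∈ XF u := by
        have := hxmem v hvr
        rwa [hpv] at this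
      exact ((hI u).2 hur2).2.1 (h.symm ▸ hxv)
    · rw [hfc u v hvr hpv, hfc u w hwr hpw]
      intro h
      apply hvw
      have ev : x v = labOf T r par u (XF u) v := by rw [hxlab v, hpv]
      have ew : x w = labOf T r par u (XF u) w := by rw [hxlab w, hpw]
      rw [ev, ew] at h
      exact labOf_inj T r par u (XF u) v w (hI u).1.1.symm
        (hchild_mem u v huv hvr hpv) (hchild_mem u w huw hwr hpw) h
  · -- weights differ on adjacent vertices
    intro u v huv
    rw [hwsum u, hwsum v]
    rcases hL3 u v huv with ⟨hur, hpv⟩ | ⟨hvr, hpv⟩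
    · have := ((hI u).2 hur).2.2.2
      rw [hpv] at this
      rw [hwgt u, if_neg hur]
      exact this
    · have := ((hI v).2 hvr).2.2.2
      rw [hpv] at this
      rw [hwgt v, if_neg hvr]
      exact fun h => this (h.symm)
  · -- nowhere-zero
    intro e he
    induction e using Sym2.ind with
    | _ u v =>
      rw [SimpleGraph.mem_edgeSet] at he
      rcases hL3 u v he with ⟨hur, hpv⟩ | ⟨hvr, hpv⟩
      · rw [← hpv, hfe u hur]
        exact hx0 u hur
      · rw [hfc u v hvr hpv]
        exact hx0 v hvr
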